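/- arXiv:2009.04981 — 2 statements merged into one kernel-verified Lean document; each statement's English description precedes it below -/
import Mathlib

section
/- (Theorem 1.) Under the partial-decision information game setup, assume additionally that each Ω_i ⊆ ℝ^{n_i} is nonempty, closed and convex with Ω = Ω₁×…×Ω_N, and that x* ∈ Ω satisfies the variational inequality ⟨F(x*), y − x*⟩ ≥ 0 for all y ∈ Ω (the Nash equilibrium condition). Suppose the step size α > 0 satisfies ρ_α = λ_max(M_α) < 1. Consider the iteration: for each agent i, x̂_i^k = Σ_{j} w_{ij} x_j^k, x_{i,i}^{k+1} = proj_{Ω_i}(x̂_{i,i}^k − (α/q_i) g_i(x̂_i^k)), and x_{i,j}^{k+1} = x̂_{i,j}^k for j ≠ i. Then for every initial condition with x_{i,i}^0 ∈ Ω_i, the iterates satisfy ‖x^k − 1_N ⊗ x*‖_𝐐 ≤ (√ρ_α)^k ‖x^0 − 1_N ⊗ x*‖_𝐐 for all k, and hence x^k converges to 1_N ⊗ x* with linear rate. -/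
open Matrix Kronecker

/-- Heterogeneous block index: `Idx n → ℝ ≃ ℝ^{n₁+…+n_N}`. -/
abbrev Idx {N : ℕ} (n : Fin N → ℕ) : Type := (i : Fin N) × Fin (n i)

/-- `P`-weighted norm `‖x‖_P = √(xᵀ P x)`. -/
noncomputable def wnorm {ι : Type*} [Fintype ι] (P : Matrix ι ι ℝ) (x : ι → ℝ) : ℝ :=
  Real.sqrt (x ⬝ᵥ P.mulVec x)

/-- Largest eigenvalue of a (hermitian) real matrix. -/
noncomputable def eigMax {m : ℕ} (A : Matrix (Fin m) (Fin m) ℝ) : ℝ :=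
  if hA : A.IsHermitian then ⨆ i, hA.eigenvalues i else 0

/-- The singular values of a real square matrix, sorted in nondecreasing order. -/
noncomputable def sortedSingVals {N : ℕ} (A : Matrix (Fin N) (Fin N) ℝ) : Fin N → ℝ :=
  fun i =>
    Real.sqrt (((Matrix.isHermitian_conjTranspose_mul_self A).eigenvalues ∘
      Tuple.sort (Matrix.isHermitian_conjTranspose_mul_self A).eigenvalues) i)

/-- `p` is the Euclidean projection of `u` onto `S ⊆ ℝ^d`. -/
def IsEuclProjOn {d : ℕ} (S : Set (Fin d → ℝ)) (u p : Fin d → ℝ) : Prop :=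
  p ∈ S ∧ ∀ z ∈ S, ∑ a, (u a - p a) ^ 2 ≤ ∑ a, (u a - z a) ^ 2

section helpers
open Matrix


lemma myherm_transpose {ι : Type*} [Fintype ι] {A : Matrix ι ι ℝ} (hA : A.IsHermitian) : Aᵀ = A := by
  have h : Aᴴ = A := hA
  rwa [conjTranspose_eq_transpose_of_trivial] at h

lemma inner_eq_dot {ι : Type*} [Fintype ι] (x y : EuclideanSpace ℝ ι) :
    (inner ℝ x y : ℝ) = (⇑x) ⬝ᵥ (⇑y) := by
  simp [PiLp.inner_apply, dotProduct, RCLike.inner_apply, mul_comm]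

lemma dot_comm' {ι : Type*} [Fintype ι] (x y : ι → ℝ) : x ⬝ᵥ y = y ⬝ᵥ x := by
  simp [dotProduct, mul_comm]

lemma dot_self_nonneg' {ι : Type*} [Fintype ι] (x : ι → ℝ) : 0 ≤ x ⬝ᵥ x :=
  Finset.sum_nonneg fun i _ => mul_self_nonneg _

/-- expansion of dot product along an eigenbasis -/
lemma eigen_dot {ι : Type*} [Fintype ι] [DecidableEq ι] {A : Matrix ι ι ℝ} (hA : A.IsHermitian)
    (x y : ι → ℝ) :
    x ⬝ᵥ y = ∑ i, (⇑(hA.eigenvectorBasis i) ⬝ᵥ x) * (⇑(hA.eigenvectorBasis i) ⬝ᵥ y) := by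
  have h := hA.eigenvectorBasis.sum_inner_mul_inner
    ((WithLp.equiv 2 (ι → ℝ)).symm x) ((WithLp.equiv 2 (ι → ℝ)).symm y)
  simp only [inner_eq_dot] at h
  have hx : ⇑((WithLp.equiv 2 (ι → ℝ)).symm x) = x := rfl
  have hy : ⇑((WithLp.equiv 2 (ι → ℝ)).symm y) = y := rfl
  rw [hx, hy] at h
  rw [← h]
  congr 1; funext i
  rw [dot_comm' x]

lemma eigen_apply {ι : Type*} [Fintype ι] [DecidableEq ι] {A : Matrix ι ι ℝ} (hA : A.IsHermitian)
    (x : ι → ℝ) (i : ι) :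
    ⇑(hA.eigenvectorBasis i) ⬝ᵥ A.mulVec x
      = hA.eigenvalues i * (⇑(hA.eigenvectorBasis i) ⬝ᵥ x) := by
  rw [dotProduct_mulVec, ← mulVec_transpose, myherm_transpose hA, hA.mulVec_eigenvectorBasis,
    smul_dotProduct]
  simp

lemma eigen_quad {ι : Type*} [Fintype ι] [DecidableEq ι] {A : Matrix ι ι ℝ} (hA : A.IsHermitian)
    (v : ι → ℝ) :
    v ⬝ᵥ A.mulVec v = ∑ i, hA.eigenvalues i * (⇑(hA.eigenvectorBasis i) ⬝ᵥ v) ^ 2 := by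
  rw [eigen_dot hA]
  congr 1; funext i
  rw [eigen_apply hA]; ring

lemma eigen_norm {ι : Type*} [Fintype ι] [DecidableEq ι] {A : Matrix ι ι ℝ} (hA : A.IsHermitian)
    (v : ι → ℝ) :
    v ⬝ᵥ v = ∑ i, (⇑(hA.eigenvectorBasis i) ⬝ᵥ v) ^ 2 := by
  rw [eigen_dot hA]; congr 1; funext i; ring

lemma rayleigh_le {m : ℕ} (hm : 0 < m) {A : Matrix (Fin m) (Fin m) ℝ} (hA : A.IsHermitian)
    (v : Fin m → ℝ) :
    v ⬝ᵥ A.mulVec v ≤ eigMax A * (v ⬝ᵥ v) := by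
  have : Nonempty (Fin m) := ⟨⟨0, hm⟩⟩
  rw [eigMax, dif_pos hA, eigen_quad hA, eigen_norm hA, Finset.mul_sum]
  apply Finset.sum_le_sum
  intro i _
  have h1 : hA.eigenvalues i ≤ ⨆ j, hA.eigenvalues j :=
    le_ciSup (Set.Finite.bddAbove (Set.finite_range _)) i
  exact mul_le_mul_of_nonneg_right h1 (sq_nonneg _)

/-- eigenvalues of AᴴA are nonnegative -/
lemma eigs_AhA_nonneg {ι : Type*} [Fintype ι] [DecidableEq ι] (B : Matrix ι ι ℝ) (i : ι) :
    0 ≤ (isHermitian_conjTranspose_mul_self B).eigenvalues i := by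
  set hA := isHermitian_conjTranspose_mul_self B
  have h1 : ⇑(hA.eigenvectorBasis i) ⬝ᵥ (Bᴴ * B).mulVec ⇑(hA.eigenvectorBasis i)
      = hA.eigenvalues i * (⇑(hA.eigenvectorBasis i) ⬝ᵥ ⇑(hA.eigenvectorBasis i)) :=
    eigen_apply hA _ i
  have hBB : ∀ z : ι → ℝ, z ⬝ᵥ (Bᴴ * B).mulVec z = (B.mulVec z) ⬝ᵥ (B.mulVec z) := by
    intro z
    rw [← mulVec_mulVec, dotProduct_mulVec]
    congr 1
    have : Bᴴ = Bᵀ := by ext i j; simp [conjTranspose_apply]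
    rw [this, ← mulVec_transpose, transpose_transpose]
  have hnorm : ⇑(hA.eigenvectorBasis i) ⬝ᵥ ⇑(hA.eigenvectorBasis i) = 1 := by
    have := inner_eq_dot (hA.eigenvectorBasis i) (hA.eigenvectorBasis i)
    rw [← this]
    have h := hA.eigenvectorBasis.orthonormal.1 i
    rw [real_inner_self_eq_norm_mul_norm, h, mul_one]
  rw [hBB, hnorm, mul_one] at h1
  rw [← h1]
  exact dot_self_nonneg' _

lemma dot_AhA {ι : Type*} [Fintype ι] (B : Matrix ι ι ℝ) (z : ι → ℝ) :
    z ⬝ᵥ (Bᴴ * B).mulVec z = (B.mulVec z) ⬝ᵥ (B.mulVec z) := by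
  rw [← mulVec_mulVec, dotProduct_mulVec]
  congr 1
  have : Bᴴ = Bᵀ := by ext i j; simp [conjTranspose_apply]
  rw [this, ← mulVec_transpose, transpose_transpose]

lemma spec_contract {m : ℕ} (hm : 2 ≤ m) (B : Matrix (Fin m) (Fin m) ℝ) (w : Fin m → ℝ)
    (hw : w ⬝ᵥ w ≠ 0) (hWw : B.mulVec w = w) (hWtw : Bᵀ.mulVec w = w)
    (lam' : ℝ)
    (hlam' : lam' = ((isHermitian_conjTranspose_mul_self B).eigenvalues ∘
      Tuple.sort (isHermitian_conjTranspose_mul_self B).eigenvalues) ⟨m - 2, by omega⟩)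
    (hlt : lam' < 1)
    (z : Fin m → ℝ) (hz : w ⬝ᵥ z = 0) :
    (B.mulVec z) ⬝ᵥ (B.mulVec z) ≤ lam' * (z ⬝ᵥ z) := by
  set hA := isHermitian_conjTranspose_mul_self B with hAdef
  set lam := hA.eigenvalues with hlamdef
  set c : Fin m → ℝ := fun i => ⇑(hA.eigenvectorBasis i) ⬝ᵥ z with hc
  set d : Fin m → ℝ := fun i => ⇑(hA.eigenvectorBasis i) ⬝ᵥ w with hdd
  have hBh : Bᴴ = Bᵀ := by ext i j; simp [conjTranspose_apply]
  have hAw : (Bᴴ * B).mulVec w = w := by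
    rw [← mulVec_mulVec, hWw, hBh, hWtw]
  have hd : ∀ i, lam i * d i = d i := by
    intro i
    have h1 := eigen_apply hA w i
    rw [hAw] at h1
    exact h1.symm
  have hT0 : (0:ℕ) < m := by omega
  set T : Fin m := Tuple.sort lam ⟨m - 1, by omega⟩ with hTdef
  have hle : ∀ i, i ≠ T → lam i ≤ lam' := by
    intro i hi
    set j : Fin m := (Tuple.sort lam).symm i with hj
    have hji : Tuple.sort lam j = i := Equiv.apply_symm_apply _ _
    have hjne : (j : ℕ) ≠ m - 1 := by
      intro hcon
      apply hi
      rw [← hji, hTdef]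
      congr 1
      exact Fin.ext hcon
    have hjle : j ≤ (⟨m - 2, by omega⟩ : Fin m) := by
      have h2 := j.isLt
      rw [Fin.le_def]
      simp only []
      omega
    have hmono := Tuple.monotone_sort lam hjle
    simp only [Function.comp_apply, hji] at hmono
    rw [hlam']
    exact hmono
  have hlam'0 : 0 ≤ lam' := by
    rw [hlam']
    exact eigs_AhA_nonneg B _
  have key : ∑ i, lam i * c i ^ 2 ≤ lam' * ∑ i, c i ^ 2 := by
    rw [Finset.mul_sum]
    by_cases hcase : lam T ≤ lam'
    · apply Finset.sum_le_sum
      intro i _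
      by_cases hi : i = T
      · subst hi; exact mul_le_mul_of_nonneg_right hcase (sq_nonneg _)
      · exact mul_le_mul_of_nonneg_right (hle i hi) (sq_nonneg _)
    · have hex : ∃ i, d i ≠ 0 := by
        by_contra hcon
        push_neg at hcon
        apply hw
        rw [eigen_norm hA w]
        apply Finset.sum_eq_zero
        intro i _
        rw [show ⇑(hA.eigenvectorBasis i) ⬝ᵥ w = d i from rfl, hcon i]
        ring
      obtain ⟨i1, hd1⟩ := hex
      have hlam1 : lam i1 = 1 := by
        have h1 := hd i1
        have := mul_right_cancel₀ hd1 (by rw [h1, one_mul] : lam i1 * d i1 = 1 * d i1)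
        exact this
      have hi1T : i1 = T := by
        by_contra hcon
        have := hle i1 hcon
        rw [hlam1] at this
        linarith
      have hdz : ∀ i, i ≠ T → d i = 0 := by
        intro i hi
        by_contra hdi
        have h1 := hd i
        have hli : lam i = 1 := mul_right_cancel₀ hdi (by rw [h1, one_mul] : lam i * d i = 1 * d i)
        have := hle i hi
        rw [hli] at this
        linarith
      have hcT : c T = 0 := by
        have h0 : w ⬝ᵥ z = ∑ i, d i * c i := eigen_dot hA w z
        rw [hz] at h0
        have h1 : ∑ i, d i * c i = d T * c T := by
          apply Finset.sum_eq_single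
          · intro i _ hi; rw [hdz i hi]; ring
          · intro h; exact absurd (Finset.mem_univ T) h
        rw [h1] at h0
        have hdT : d T ≠ 0 := hi1T ▸ hd1
        exact (mul_eq_zero.mp h0.symm).resolve_left hdT
      apply Finset.sum_le_sum
      intro i _
      by_cases hi : i = T
      · subst hi
        rw [hcT]
        simp
      · exact mul_le_mul_of_nonneg_right (hle i hi) (sq_nonneg _)
  calc (B.mulVec z) ⬝ᵥ (B.mulVec z) = z ⬝ᵥ (Bᴴ * B).mulVec z := (dot_AhA B z).symm
    _ = ∑ i, lam i * c i ^ 2 := eigen_quad hA z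
    _ ≤ lam' * ∑ i, c i ^ 2 := key
    _ = lam' * (z ⬝ᵥ z) := by rw [← eigen_norm hA z]

lemma mix_contract {N : ℕ} (hN : 2 ≤ N) (W : Matrix (Fin N) (Fin N) ℝ)
    (q : Fin N → ℝ) (hqpos : ∀ i, 0 < q i) (hqW : Matrix.vecMul q W = q)
    (hWrow : ∀ i, ∑ j, W i j = 1)
    (lam' : ℝ)
    (hlam' : lam' = ((isHermitian_conjTranspose_mul_self
        (Matrix.diagonal (fun i => Real.sqrt (q i)) * W *
          Matrix.diagonal (fun i => (Real.sqrt (q i))⁻¹))).eigenvalues ∘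
      Tuple.sort (isHermitian_conjTranspose_mul_self
        (Matrix.diagonal (fun i => Real.sqrt (q i)) * W *
          Matrix.diagonal (fun i => (Real.sqrt (q i))⁻¹))).eigenvalues) ⟨N - 2, by omega⟩)
    (hlt : lam' < 1)
    (v : Fin N → ℝ) (hv : ∑ i, q i * v i = 0) :
    ∑ i, q i * (∑ j, W i j * v j) ^ 2 ≤ lam' * ∑ i, q i * v i ^ 2 := by
  set B := Matrix.diagonal (fun i => Real.sqrt (q i)) * W *
      Matrix.diagonal (fun i => (Real.sqrt (q i))⁻¹) with hBdef
  have hsq : ∀ i, 0 < Real.sqrt (q i) := fun i => Real.sqrt_pos.2 (hqpos i)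
  have hss : ∀ i, Real.sqrt (q i) * Real.sqrt (q i) = q i :=
    fun i => Real.mul_self_sqrt (hqpos i).le
  have hBapp : ∀ i j, B i j = Real.sqrt (q i) * W i j * (Real.sqrt (q j))⁻¹ := by
    intro i j
    rw [hBdef, Matrix.mul_diagonal, Matrix.diagonal_mul]
  have hWw : B.mulVec (fun i => Real.sqrt (q i)) = (fun i => Real.sqrt (q i)) := by
    funext i
    rw [Matrix.mulVec]
    simp only [dotProduct]
    have h1 : ∀ j, B i j * Real.sqrt (q j) = Real.sqrt (q i) * W i j := by
      intro j
      rw [hBapp]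
      have hne : Real.sqrt (q j) ≠ 0 := (hsq j).ne'
      field_simp
    rw [Finset.sum_congr rfl (fun j _ => h1 j), ← Finset.mul_sum, hWrow, mul_one]
  have hWtw : Bᵀ.mulVec (fun i => Real.sqrt (q i)) = (fun i => Real.sqrt (q i)) := by
    funext i
    rw [Matrix.mulVec]
    simp only [dotProduct, Matrix.transpose_apply]
    have h1 : ∀ j, B j i * Real.sqrt (q j) = q j * W j i * (Real.sqrt (q i))⁻¹ := by
      intro j
      rw [hBapp]
      linear_combination (W j i * (Real.sqrt (q i))⁻¹) * hss j
    rw [Finset.sum_congr rfl (fun j _ => h1 j), ← Finset.sum_mul]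
    have h2 : ∑ j, q j * W j i = q i := by
      have h3 := congrFun hqW i
      rw [Matrix.vecMul, dotProduct] at h3
      exact h3
    rw [h2]
    have hne : Real.sqrt (q i) ≠ 0 := (hsq i).ne'
    field_simp
    rw [Real.sq_sqrt (hqpos i).le]
  have hww : (fun i => Real.sqrt (q i)) ⬝ᵥ (fun i => Real.sqrt (q i)) ≠ 0 := by
    have h1 : (fun i => Real.sqrt (q i)) ⬝ᵥ (fun i => Real.sqrt (q i)) = ∑ i, q i := by
      simp only [dotProduct]
      exact Finset.sum_congr rfl fun i _ => hss i
    rw [h1]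
    have h2 : (0:ℝ) < ∑ i, q i :=
      Finset.sum_pos (fun i _ => hqpos i) ⟨⟨0, by omega⟩, Finset.mem_univ _⟩
    linarith
  have hwz : (fun i => Real.sqrt (q i)) ⬝ᵥ (fun i => Real.sqrt (q i) * v i) = 0 := by
    have h1 : (fun i => Real.sqrt (q i)) ⬝ᵥ (fun i => Real.sqrt (q i) * v i)
        = ∑ i, q i * v i := by
      simp only [dotProduct]
      refine Finset.sum_congr rfl fun i _ => ?_
      linear_combination v i * hss i
    rw [h1, hv]
  have hBz : B.mulVec (fun i => Real.sqrt (q i) * v i)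
      = fun i => Real.sqrt (q i) * ∑ j, W i j * v j := by
    funext i
    rw [Matrix.mulVec]
    simp only [dotProduct]
    have h1 : ∀ j, B i j * (Real.sqrt (q j) * v j) = Real.sqrt (q i) * (W i j * v j) := by
      intro j
      rw [hBapp]
      have hne : Real.sqrt (q j) ≠ 0 := (hsq j).ne'
      field_simp
    rw [Finset.sum_congr rfl (fun j _ => h1 j), ← Finset.mul_sum]
  have main := spec_contract hN B (fun i => Real.sqrt (q i)) hww hWw hWtw lam' hlam' hlt
    (fun i => Real.sqrt (q i) * v i) hwz
  rw [hBz] at main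
  calc ∑ i, q i * (∑ j, W i j * v j) ^ 2
      = (fun i => Real.sqrt (q i) * ∑ j, W i j * v j) ⬝ᵥ
        (fun i => Real.sqrt (q i) * ∑ j, W i j * v j) := by
        simp only [dotProduct]
        refine Finset.sum_congr rfl fun i _ => ?_
        linear_combination ((∑ j, W i j * v j) ^ 2) * (hss i).symm
    _ ≤ lam' * ((fun i => Real.sqrt (q i) * v i) ⬝ᵥ (fun i => Real.sqrt (q i) * v i)) := main
    _ = lam' * ∑ i, q i * v i ^ 2 := by
        congr 1
        simp only [dotProduct]
        refine Finset.sum_congr rfl fun i _ => ?_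
        linear_combination (v i ^ 2) * hss i


lemma proj_char {d : ℕ} {S : Set (Fin d → ℝ)} (hS : Convex ℝ S) {u p : Fin d → ℝ}
    (h : IsEuclProjOn S u p) : ∀ z ∈ S, ∑ a, (u a - p a) * (z a - p a) ≤ 0 := by
  intro z hz
  by_contra hcon
  push_neg at hcon
  set c := ∑ a, (u a - p a) * (z a - p a) with hcdef
  set dd := ∑ a, (z a - p a) ^ 2 with hdddef
  have hdd0 : 0 ≤ dd := Finset.sum_nonneg fun a _ => sq_nonneg _
  have hdpos : 0 < dd := by
    rcases eq_or_lt_of_le hdd0 with heq | hlt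
    · exfalso
      have hzz : ∀ a, z a = p a := by
        intro a
        have h1 : ∀ b ∈ Finset.univ, (0:ℝ) ≤ (z b - p b) ^ 2 := fun b _ => sq_nonneg _
        have h2 := (Finset.sum_eq_zero_iff_of_nonneg h1).mp heq.symm a (Finset.mem_univ a)
        have := sq_eq_zero_iff.mp h2
        linarith
      have : c = 0 := by
        rw [hcdef]
        apply Finset.sum_eq_zero
        intro a _
        rw [hzz a]
        ring
      rw [this] at hcon
      exact lt_irrefl _ hcon
    · exact hlt
  set t := min 1 (c / dd) with htdef
  have ht0 : 0 < t := lt_min one_pos (div_pos hcon hdpos)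
  have ht1 : t ≤ 1 := min_le_left _ _
  have htc : t * dd ≤ c := by
    calc t * dd ≤ (c / dd) * dd :=
          mul_le_mul_of_nonneg_right (min_le_right _ _) hdd0
      _ = c := div_mul_cancel₀ _ hdpos.ne'
  have hzmem : (fun a => p a + t * (z a - p a)) ∈ S := by
    have := hS h.1 hz (by linarith : (0:ℝ) ≤ 1 - t) ht0.le (by ring)
    convert this using 1
    funext a
    simp only [Pi.add_apply, Pi.smul_apply, smul_eq_mul]
    ring
  have hineq := h.2 _ hzmem
  have hexp : ∑ a, (u a - (p a + t * (z a - p a))) ^ 2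
      = ∑ a, (u a - p a) ^ 2 - 2 * t * c + t ^ 2 * dd := by
    rw [hcdef, hdddef, Finset.mul_sum, Finset.mul_sum, ← Finset.sum_sub_distrib,
      ← Finset.sum_add_distrib]
    refine Finset.sum_congr rfl fun a _ => ?_
    ring
  rw [hexp] at hineq
  nlinarith [mul_le_mul_of_nonneg_left htc ht0.le]

lemma proj_fixed {d : ℕ} {S : Set (Fin d → ℝ)} {u p : Fin d → ℝ}
    (hp : p ∈ S) (hvar : ∀ z ∈ S, ∑ a, (u a - p a) * (z a - p a) ≤ 0) :
    IsEuclProjOn S u p := by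
  refine ⟨hp, fun z hz => ?_⟩
  have hexp : ∑ a, (u a - z a) ^ 2
      = ∑ a, (u a - p a) ^ 2 - 2 * (∑ a, (u a - p a) * (z a - p a))
        + ∑ a, (z a - p a) ^ 2 := by
    rw [Finset.mul_sum, ← Finset.sum_sub_distrib, ← Finset.sum_add_distrib]
    refine Finset.sum_congr rfl fun a _ => ?_
    ring
  have h1 := hvar z hz
  have h2 : (0:ℝ) ≤ ∑ a, (z a - p a) ^ 2 := Finset.sum_nonneg fun a _ => sq_nonneg _
  rw [hexp]
  linarith

lemma proj_nonexp {d : ℕ} {S : Set (Fin d → ℝ)} (hS : Convex ℝ S) {u p v r : Fin d → ℝ}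
    (h1 : IsEuclProjOn S u p) (h2 : IsEuclProjOn S v r) :
    ∑ a, (p a - r a) ^ 2 ≤ ∑ a, (u a - v a) ^ 2 := by
  have hc1 := proj_char hS h1 r h2.1
  have hc2 := proj_char hS h2 p h1.1
  set P := ∑ a, (p a - r a) ^ 2 with hP
  set I := ∑ a, (u a - v a) * (p a - r a) with hI
  have hkey : P ≤ I := by
    have hexp : P - I = ∑ a, ((u a - p a) * (r a - p a) + (v a - r a) * (p a - r a)) := by
      rw [hP, hI, ← Finset.sum_sub_distrib]
      refine Finset.sum_congr rfl fun a _ => ?_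
      ring
    have hadd : ∑ a, ((u a - p a) * (r a - p a) + (v a - r a) * (p a - r a))
        = (∑ a, (u a - p a) * (r a - p a)) + ∑ a, (v a - r a) * (p a - r a) :=
      Finset.sum_add_distrib
    linarith
  have hcs : I ^ 2 ≤ (∑ a, (u a - v a) ^ 2) * P :=
    Finset.sum_mul_sq_le_sq_mul_sq _ _ _
  have hP0 : 0 ≤ P := Finset.sum_nonneg fun a _ => sq_nonneg _
  have hU0 : 0 ≤ ∑ a, (u a - v a) ^ 2 := Finset.sum_nonneg fun a _ => sq_nonneg _
  rcases eq_or_lt_of_le hP0 with heq | hlt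
  · linarith
  · have h3 : P * P ≤ I * I := mul_self_le_mul_self hP0 hkey
    have h4 : I * I ≤ (∑ a, (u a - v a) ^ 2) * P := by nlinarith [hcs]
    have := le_of_mul_le_mul_right (by linarith : P * P ≤ (∑ a, (u a - v a) ^ 2) * P) hlt
    exact this

lemma sq_le_of_sqrt_le {A B c : ℝ} (hA : 0 ≤ A) (hB : 0 ≤ B) (h : Real.sqrt A ≤ c * Real.sqrt B) :
    A ≤ c ^ 2 * B := by
  nlinarith [Real.sq_sqrt hA, Real.sq_sqrt hB,
    mul_self_le_mul_self (Real.sqrt_nonneg A) h]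

lemma neg_sqrt_CS {ι : Type*} (s : Finset ι) (f g : ι → ℝ) :
    -(Real.sqrt (∑ i ∈ s, f i ^ 2) * Real.sqrt (∑ i ∈ s, g i ^ 2)) ≤ ∑ i ∈ s, f i * g i := by
  have h := Real.sum_mul_le_sqrt_mul_sqrt s (fun i => -(f i)) g
  simp only [neg_mul, Finset.sum_neg_distrib, neg_sq] at h
  linarith

lemma sqrt_add_le' {A B : ℝ} (hA : 0 ≤ A) (hB : 0 ≤ B) :
    Real.sqrt (A + B) ≤ Real.sqrt A + Real.sqrt B := by
  have h1 : A + B ≤ (Real.sqrt A + Real.sqrt B) ^ 2 := by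
    nlinarith [Real.sq_sqrt hA, Real.sq_sqrt hB,
      mul_nonneg (Real.sqrt_nonneg A) (Real.sqrt_nonneg B)]
  calc Real.sqrt (A + B) ≤ Real.sqrt ((Real.sqrt A + Real.sqrt B) ^ 2) := Real.sqrt_le_sqrt h1
    _ = Real.sqrt A + Real.sqrt B := Real.sqrt_sq (by positivity)

lemma wsum_decomp {N : ℕ} (q : Fin N → ℝ) (hqsum : ∑ i, q i = 1) (v : Fin N → ℝ) (c m : ℝ)
    (hm : m = ∑ i, q i * v i) :
    ∑ i, q i * (v i - c) ^ 2 = (∑ i, q i * (v i - m) ^ 2) + (m - c) ^ 2 := by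
  have h : ∀ i, q i * (v i - c) ^ 2
      = q i * (v i - m) ^ 2 + (2 * (m - c)) * (q i * v i) + (c ^ 2 - m ^ 2) * q i := by
    intro i; ring
  rw [Finset.sum_congr rfl (fun i _ => h i), Finset.sum_add_distrib, Finset.sum_add_distrib,
    ← Finset.mul_sum, ← Finset.mul_sum, ← hm, hqsum]
  ring

end helpers

set_option maxHeartbeats 1000000 in
/-- Theorem 1: the fully-distributed fixed-step pseudo-gradient iteration
(Algorithm 1) converges to `1_N ⊗ x*` with linear rate `√ρ_α` in the `𝐐`-norm, provided the
step size `α` satisfies `ρ_α = λ_max(M_α) < 1`. -/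
theorem stmt11
    (N : ℕ) (hN : 1 < N)
    (n : Fin N → ℕ)
    -- the communication matrix
    (W : Matrix (Fin N) (Fin N) ℝ)
    (hWnonneg : ∀ i j, 0 ≤ W i j)
    (hWdiag : ∀ i, 0 < W i i)
    (hWrow : ∀ i, ∑ j, W i j = 1)
    (hWconn : ∀ i j, ∃ m : ℕ, 1 ≤ m ∧ 0 < (W ^ m) i j)
    -- its left Perron-Frobenius eigenvector
    (q : Fin N → ℝ) (hqpos : ∀ i, 0 < q i)
    (hqW : Matrix.vecMul q W = q) (hqsum : ∑ i, q i = 1)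
    (Q : Matrix (Fin N) (Fin N) ℝ) (hQ : Q = Matrix.diagonal q)
    (bQ : Matrix (Fin N × Idx n) (Fin N × Idx n) ℝ)
    (hbQ : bQ = Q ⊗ₖ (1 : Matrix (Idx n) (Idx n) ℝ))
    (σbar : ℝ)
    (hσbar : σbar = sortedSingVals
      (Matrix.diagonal (fun i => Real.sqrt (q i)) * W *
        Matrix.diagonal (fun i => (Real.sqrt (q i))⁻¹)) ⟨N - 2, by omega⟩)
    -- the game: local feasible sets and partial gradients (continuous maps)
    (Ω : (i : Fin N) → Set (Fin (n i) → ℝ))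
    (hΩne : ∀ i, (Ω i).Nonempty)
    (hΩclosed : ∀ i, IsClosed (Ω i))
    (hΩconvex : ∀ i, Convex ℝ (Ω i))
    (g : (i : Fin N) → (Idx n → ℝ) → (Fin (n i) → ℝ))
    (hgcont : ∀ i, Continuous (g i))
    (ℓ μ : ℝ) (hℓ : 0 < ℓ) (hμ : 0 < μ)
    -- the extended pseudo-gradient 𝐅(x) = col(gᵢ(xᵢ)) is ℓ-Lipschitz (Euclidean norms)
    (hlip : ∀ x y : Fin N → Idx n → ℝ,
      Real.sqrt (∑ p : Idx n, (g p.1 (x p.1) p.2 - g p.1 (y p.1) p.2) ^ 2) ≤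
        ℓ * Real.sqrt (∑ i, ∑ p : Idx n, (x i p - y i p) ^ 2))
    -- the pseudo-gradient F(v) = 𝐅(1_N ⊗ v) is μ-strongly monotone
    (hmono : ∀ u v : Idx n → ℝ,
      μ * (∑ p : Idx n, (u p - v p) ^ 2) ≤
        ∑ p : Idx n, (g p.1 u p.2 - g p.1 v p.2) * (u p - v p))
    -- x* ∈ Ω solves the variational inequality ⟨F(x*), y - x*⟩ ≥ 0 ∀ y ∈ Ω
    (xstar : Idx n → ℝ)
    (hxstarΩ : ∀ i, (fun a => xstar ⟨i, a⟩) ∈ Ω i)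
    (hVI : ∀ y : Idx n → ℝ, (∀ i, (fun a => y ⟨i, a⟩) ∈ Ω i) →
      0 ≤ ∑ p : Idx n, g p.1 xstar p.2 * (y p - xstar p))
    -- the step size and the contraction constant ρ_α = λ_max(M_α) < 1
    (qmin μbar ℓbar : ℝ)
    (hqmin : qmin = ⨅ i, q i)
    (hμbar : μbar = μ / ⨆ i, q i)
    (hℓbar : ℓbar = ℓ / ⨅ i, q i)
    (α : ℝ) (hα : 0 < α)
    (Mα : Matrix (Fin 2) (Fin 2) ℝ)
    (hMα : Mα = !![1 - 2 * α * μbar * qmin + α ^ 2 * ℓbar ^ 2, 2 * α * ℓbar * σbar;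
                   2 * α * ℓbar * σbar, (1 + 2 * α * ℓbar + α ^ 2 * ℓbar ^ 2) * σbar ^ 2])
    (ρ : ℝ) (hρ : ρ = eigMax Mα) (hρ1 : ρ < 1)
    -- Algorithm 1
    (x : ℕ → Fin N → Idx n → ℝ)
    (hinit : ∀ i, (fun a => x 0 i ⟨i, a⟩) ∈ Ω i)
    (hupd_off : ∀ (k : ℕ) (i : Fin N) (p : Idx n), p.1 ≠ i →
      x (k + 1) i p = ∑ j, W i j * x k j p)
    (hupd_diag : ∀ (k : ℕ) (i : Fin N),
      IsEuclProjOn (Ω i)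
        (fun a => (∑ j, W i j * x k j ⟨i, a⟩) -
          (α / q i) * g i (fun r => ∑ j, W i j * x k j r) a)
        (fun a => x (k + 1) i ⟨i, a⟩)) :
    ∀ k : ℕ,
      wnorm bQ (fun p : Fin N × Idx n => x k p.1 p.2 - xstar p.2) ≤
        (Real.sqrt ρ) ^ k * wnorm bQ (fun p : Fin N × Idx n => x 0 p.1 p.2 - xstar p.2) := by
  classical
  -- ======== basic scalar facts ========
  have hN2 : 2 ≤ N := hN
  have hNE : Nonempty (Fin N) := ⟨⟨0, by omega⟩⟩
  obtain ⟨i0, hi0⟩ : ∃ i, q i = ⨅ j, q j := exists_eq_ciInf_of_finite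
  have hqminpos : 0 < qmin := by rw [hqmin, ← hi0]; exact hqpos i0
  have hqmin_le : ∀ i, qmin ≤ q i := by
    intro i
    rw [hqmin]
    exact ciInf_le (Set.Finite.bddBelow (Set.finite_range _)) i
  obtain ⟨i1, hi1⟩ : ∃ i, q i = ⨆ j, q j := exists_eq_ciSup_of_finite
  have hqle_max : ∀ i, q i ≤ ⨆ j, q j := by
    intro i
    exact le_ciSup (Set.Finite.bddAbove (Set.finite_range _)) i
  have hqmaxpos : 0 < ⨆ j, q j := by rw [← hi1]; exact hqpos i1
  have hℓbar' : ℓbar = ℓ / qmin := by rw [hℓbar, hqmin]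
  have hℓbarpos : 0 < ℓbar := by rw [hℓbar']; exact div_pos hℓ hqminpos
  have hμbarqmin : μbar * qmin ≤ μ := by
    rw [hμbar]
    rw [div_mul_eq_mul_div, div_le_iff₀ hqmaxpos]
    have := hqmin_le i1
    nlinarith [hi1, hμ.le]
  have hNqmin : (N : ℝ) * qmin ≤ 1 := by
    have h1 : ∑ i : Fin N, qmin ≤ ∑ i, q i := Finset.sum_le_sum fun i _ => hqmin_le i
    rw [hqsum] at h1
    simpa [Finset.sum_const, Finset.card_univ, nsmul_eq_mul] using h1
  -- ======== the matrix Mα and ρ ========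
  have hMh : Mα.IsHermitian := by
    rw [hMα]
    unfold Matrix.IsHermitian
    ext i j
    fin_cases i <;> fin_cases j <;> simp [Matrix.conjTranspose_apply]
  have hquad : ∀ aa bb : ℝ,
      (1 - 2*α*μbar*qmin + α^2*ℓbar^2)*aa^2 + 4*α*ℓbar*σbar*(aa*bb)
        + (1 + 2*α*ℓbar + α^2*ℓbar^2)*σbar^2*bb^2 ≤ ρ * (aa^2 + bb^2) := by
    intro aa bb
    have h := rayleigh_le (by norm_num) hMh ![aa, bb]
    have e1 : ![aa, bb] ⬝ᵥ Mα.mulVec ![aa, bb]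
        = (1 - 2*α*μbar*qmin + α^2*ℓbar^2)*aa^2 + 4*α*ℓbar*σbar*(aa*bb)
          + (1 + 2*α*ℓbar + α^2*ℓbar^2)*σbar^2*bb^2 := by
      simp [hMα, Matrix.mulVec, dotProduct, Fin.sum_univ_two]
      ring
    have e2 : ![aa, bb] ⬝ᵥ ![aa, bb] = aa^2 + bb^2 := by
      simp [dotProduct, Fin.sum_univ_two]
      ring
    rw [e1, e2] at h
    rw [hρ]
    exact h
  -- lam' : the second largest eigenvalue of BᴴB
  set Bmat := Matrix.diagonal (fun i => Real.sqrt (q i)) * W *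
      Matrix.diagonal (fun i => (Real.sqrt (q i))⁻¹) with hBmat
  set lam' : ℝ := ((isHermitian_conjTranspose_mul_self Bmat).eigenvalues ∘
      Tuple.sort (isHermitian_conjTranspose_mul_self Bmat).eigenvalues) ⟨N - 2, by omega⟩ with hlam'
  have hlam'0 : 0 ≤ lam' := eigs_AhA_nonneg _ _
  have hσ2 : σbar ^ 2 = lam' := by
    rw [hσbar]
    unfold sortedSingVals
    exact Real.sq_sqrt hlam'0
  have hσ0 : 0 ≤ σbar := by rw [hσbar]; exact Real.sqrt_nonneg _
  have hM22ρ : (1 + 2*α*ℓbar + α^2*ℓbar^2)*σbar^2 ≤ ρ := by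
    have := hquad 0 1
    simpa using this
  have hρ0 : 0 ≤ ρ := le_trans (by positivity) hM22ρ
  have hσ2ρ : σbar^2 ≤ ρ := by
    have hfac : (1:ℝ) ≤ 1 + 2*α*ℓbar + α^2*ℓbar^2 := by
      nlinarith [mul_pos hα hℓbarpos, sq_nonneg (α*ℓbar)]
    nlinarith [mul_le_mul_of_nonneg_right hfac (sq_nonneg σbar)]
  have hlam'1 : lam' < 1 := by rw [← hσ2]; linarith
  have hmix : ∀ v : Fin N → ℝ, (∑ i, q i * v i) = 0 →
      ∑ i, q i * (∑ j, W i j * v j) ^ 2 ≤ σbar^2 * ∑ i, q i * v i ^ 2 := by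
    intro v hv
    rw [hσ2]
    exact mix_contract hN2 W q hqpos hqW hWrow lam' (by rw [hlam']) hlam'1 v hv
  -- ======== the error energy ========
  set E : ℕ → ℝ := fun k => ∑ i, ∑ p : Idx n, q i * (x k i p - xstar p) ^ 2 with hE
  have hEnonneg : ∀ k, 0 ≤ E k := by
    intro k
    refine Finset.sum_nonneg fun i _ => Finset.sum_nonneg fun p _ => ?_
    have := hqpos i
    positivity
  have hwE : ∀ k, wnorm bQ (fun p : Fin N × Idx n => x k p.1 p.2 - xstar p.2)
      = Real.sqrt (E k) := by
    intro k
    unfold wnorm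
    congr 1
    have hbQv : bQ.mulVec (fun pr : Fin N × Idx n => x k pr.1 pr.2 - xstar pr.2)
        = fun pr => q pr.1 * (x k pr.1 pr.2 - xstar pr.2) := by
      funext pr
      rw [hbQ, hQ, Matrix.mulVec]
      simp only [dotProduct, Fintype.sum_prod_type, Matrix.kroneckerMap_apply,
        Matrix.diagonal_apply, Matrix.one_apply, ite_mul, zero_mul, mul_ite, mul_one, mul_zero,
        Finset.sum_ite_eq, Finset.sum_ite_eq', Finset.mem_univ, if_true]
    rw [hbQv, hE]
    simp only [dotProduct, Fintype.sum_prod_type]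
    refine Finset.sum_congr rfl fun i _ => Finset.sum_congr rfl fun p _ => ?_
    ring
  -- ======== fixed point property of x* ========
  have hfix : ∀ i, IsEuclProjOn (Ω i)
      (fun a => xstar ⟨i, a⟩ - (α / q i) * g i xstar a) (fun a => xstar ⟨i, a⟩) := by
    intro i
    apply proj_fixed (hxstarΩ i)
    intro z hz
    set y : Idx n → ℝ := fun p => if h : p.1 = i then z (Fin.cast (by rw [h]) p.2) else xstar p
      with hy
    have hyi : ∀ a : Fin (n i), y ⟨i, a⟩ = z a := by
      intro a
      simp only [hy]
      beta_reduce
      rw [dif_pos trivial]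
      try congr 1
      try exact Fin.ext rfl
    have hyj : ∀ (j : Fin N) (a : Fin (n j)), j ≠ i → y ⟨j, a⟩ = xstar ⟨j, a⟩ := by
      intro j a hj
      simp only [hy]
      beta_reduce
      rw [dif_neg hj]
    have hyΩ : ∀ j, (fun a => y ⟨j, a⟩) ∈ Ω j := by
      intro j
      by_cases hj : j = i
      · subst hj
        have h1 : (fun a => y ⟨j, a⟩) = z := funext fun a => hyi a
        rw [h1]; exact hz
      · have h1 : (fun a => y ⟨j, a⟩) = fun a => xstar ⟨j, a⟩ := funext fun a => hyj j a hj
        rw [h1]; exact hxstarΩ j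
    have h1 := hVI y hyΩ
    have h2 : ∑ p : Idx n, g p.1 xstar p.2 * (y p - xstar p)
        = ∑ a, g i xstar a * (z a - xstar ⟨i, a⟩) := by
      rw [← Finset.univ_sigma_univ, Finset.sum_sigma]
      rw [Finset.sum_eq_single i]
      · exact Finset.sum_congr rfl fun a _ => by rw [hyi a]
      · intro j _ hj
        apply Finset.sum_eq_zero
        intro a _
        rw [hyj j a hj]
        ring
      · intro h; exact absurd (Finset.mem_univ i) h
    rw [h2] at h1
    have h3 : ∑ a, (xstar ⟨i, a⟩ - (α / q i) * g i xstar a - xstar ⟨i, a⟩) * (z a - xstar ⟨i, a⟩)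
        = -(α / q i) * ∑ a, g i xstar a * (z a - xstar ⟨i, a⟩) := by
      rw [Finset.mul_sum]
      refine Finset.sum_congr rfl fun a _ => ?_
      ring
    rw [h3]
    have hαq : 0 < α / q i := div_pos hα (hqpos i)
    exact mul_nonpos_iff.mpr (Or.inr ⟨by linarith, h1⟩)
  -- ======== one-step contraction ========
  have hstep : ∀ k, E (k + 1) ≤ ρ * E k := by
    intro k
    have hsig : ∀ (F : Idx n → ℝ), ∑ p : Idx n, F p = ∑ i, ∑ a, F ⟨i, a⟩ := by
      intro F
      rw [← Finset.univ_sigma_univ, Finset.sum_sigma]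
    set u : Fin N → Idx n → ℝ := fun i p => ∑ j, W i j * x k j p with hu
    have huip : ∀ i p, u i p = ∑ j, W i j * x k j p := fun i p => by rw [hu]
    set xb : Idx n → ℝ := fun p => ∑ i, q i * x k i p with hxb
    have hxbp : ∀ p, xb p = ∑ i, q i * x k i p := fun p => by rw [hxb]
    set a2 : ℝ := ∑ p : Idx n, (xb p - xstar p) ^ 2 with ha2
    set b2 : ℝ := ∑ i, ∑ p : Idx n, q i * (x k i p - xb p) ^ 2 with hb2
    set bh2 : ℝ := ∑ i, ∑ p : Idx n, q i * (u i p - xb p) ^ 2 with hbh2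
    set Uh : ℝ := ∑ i, ∑ p : Idx n, q i * (u i p - xstar p) ^ 2 with hUh
    have ha2nn : 0 ≤ a2 := Finset.sum_nonneg fun p _ => sq_nonneg _
    have hqsq : ∀ (i : Fin N) (c : ℝ), 0 ≤ q i * c ^ 2 :=
      fun i c => mul_nonneg (hqpos i).le (sq_nonneg _)
    have hb2nn : 0 ≤ b2 :=
      Finset.sum_nonneg fun i _ => Finset.sum_nonneg fun p _ => hqsq i _
    have hbh2nn : 0 ≤ bh2 :=
      Finset.sum_nonneg fun i _ => Finset.sum_nonneg fun p _ => hqsq i _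
    -- q-average of u equals xb
    have hxbu : ∀ p, ∑ i, q i * u i p = xb p := by
      intro p
      rw [hxbp]
      have h1 : ∀ i, q i * u i p = ∑ j, q i * (W i j * x k j p) := by
        intro i
        rw [huip, Finset.mul_sum]
      rw [Finset.sum_congr rfl fun i _ => h1 i, Finset.sum_comm]
      refine Finset.sum_congr rfl fun j _ => ?_
      have h2 : ∑ i, q i * (W i j * x k j p) = (∑ i, q i * W i j) * x k j p := by
        rw [Finset.sum_mul]
        refine Finset.sum_congr rfl fun i _ => ?_
        ring
      rw [h2]
      have h3 : ∑ i, q i * W i j = q j := congrFun hqW j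
      rw [h3]
    -- energy decompositions
    have hdecomp : ∀ (v : Fin N → Idx n → ℝ), (∀ p, ∑ i, q i * v i p = xb p) →
        ∑ i, ∑ p : Idx n, q i * (v i p - xstar p) ^ 2
          = (∑ i, ∑ p : Idx n, q i * (v i p - xb p) ^ 2) + a2 := by
      intro v hv
      conv_lhs => rw [Finset.sum_comm]
      conv_rhs => rw [Finset.sum_comm]
      rw [ha2, ← Finset.sum_add_distrib]
      refine Finset.sum_congr rfl fun p _ => ?_
      exact wsum_decomp q hqsum (fun i => v i p) (xstar p) (xb p) (hv p).symm
    have hEk : E k = b2 + a2 := by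
      rw [hE]
      exact hdecomp (fun i p => x k i p) (fun p => (hxbp p).symm)
    have hUhd : Uh = bh2 + a2 := hdecomp u hxbu
    -- mixing contraction
    have hF3 : bh2 ≤ σbar ^ 2 * b2 := by
      rw [hbh2, hb2]
      conv_lhs => rw [Finset.sum_comm]
      conv_rhs => rw [Finset.sum_comm]
      rw [Finset.mul_sum]
      refine Finset.sum_le_sum fun p _ => ?_
      have h1 := hmix (fun i => x k i p - xb p) ?_
      · have h2 : ∀ i, (∑ j, W i j * (x k j p - xb p)) = u i p - xb p := by
          intro i
          have h3 : ∀ j, W i j * (x k j p - xb p) = W i j * x k j p - W i j * xb p := by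
            intro j; ring
          rw [Finset.sum_congr rfl fun j _ => h3 j, Finset.sum_sub_distrib, ← Finset.sum_mul,
            hWrow, one_mul, ← huip]
        rw [Finset.sum_congr rfl fun i _ => (by rw [h2 i] :
          q i * (∑ j, W i j * (x k j p - xb p)) ^ 2 = q i * (u i p - xb p) ^ 2)] at h1
        exact h1
      · have h4 : ∀ i, q i * (x k i p - xb p) = q i * x k i p - q i * xb p := by
          intro i; ring
        rw [Finset.sum_congr rfl fun i _ => h4 i, Finset.sum_sub_distrib, ← Finset.sum_mul,
          hqsum, one_mul, hxbp]
        ring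
    -- ==== per-agent projection bound ====
    set G : ℝ := ∑ i, ∑ a, (g i (u i) a - g i xstar a) * (u i ⟨i, a⟩ - xstar ⟨i, a⟩) with hG
    set H : ℝ := ∑ i, (1 / q i) * ∑ a, (g i (u i) a - g i xstar a) ^ 2 with hH
    have hper : ∀ i, ∑ p : Idx n, (x (k+1) i p - xstar p) ^ 2
        ≤ (∑ p : Idx n, (u i p - xstar p) ^ 2)
          - 2 * (α / q i) * (∑ a, (g i (u i) a - g i xstar a) * (u i ⟨i, a⟩ - xstar ⟨i, a⟩))
          + (α / q i) ^ 2 * ∑ a, (g i (u i) a - g i xstar a) ^ 2 := by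
      intro i
      have hproj := proj_nonexp (hΩconvex i) (hupd_diag k i) (hfix i)
      rw [show (fun r => ∑ j, W i j * x k j r) = u i from funext fun r => (huip i r).symm]
        at hproj
      have hexp : ∑ a, ((∑ j, W i j * x k j ⟨i, a⟩) - α / q i * g i (u i) a
            - (xstar ⟨i, a⟩ - α / q i * g i xstar a)) ^ 2
          = (∑ a, (u i ⟨i, a⟩ - xstar ⟨i, a⟩) ^ 2)
            - 2 * (α / q i) * (∑ a, (g i (u i) a - g i xstar a) * (u i ⟨i, a⟩ - xstar ⟨i, a⟩))
            + (α / q i) ^ 2 * ∑ a, (g i (u i) a - g i xstar a) ^ 2 := by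
        rw [Finset.mul_sum, Finset.mul_sum, ← Finset.sum_sub_distrib, ← Finset.sum_add_distrib]
        refine Finset.sum_congr rfl fun a _ => ?_
        rw [← huip]
        ring
      rw [hexp] at hproj
      calc ∑ p : Idx n, (x (k+1) i p - xstar p) ^ 2
          = ∑ j, ∑ a, (x (k+1) i ⟨j, a⟩ - xstar ⟨j, a⟩) ^ 2 :=
            hsig (fun p => (x (k+1) i p - xstar p) ^ 2)
        _ = (∑ j ∈ Finset.univ \ {i}, ∑ a, (x (k+1) i ⟨j, a⟩ - xstar ⟨j, a⟩) ^ 2)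
            + ∑ a, (x (k+1) i ⟨i, a⟩ - xstar ⟨i, a⟩) ^ 2 :=
            (Finset.sum_eq_sum_sdiff_singleton_add (Finset.mem_univ i) _)
        _ ≤ (∑ j ∈ Finset.univ \ {i}, ∑ a, (u i ⟨j, a⟩ - xstar ⟨j, a⟩) ^ 2)
            + ((∑ a, (u i ⟨i, a⟩ - xstar ⟨i, a⟩) ^ 2)
              - 2 * (α / q i) *
                (∑ a, (g i (u i) a - g i xstar a) * (u i ⟨i, a⟩ - xstar ⟨i, a⟩))
              + (α / q i) ^ 2 * ∑ a, (g i (u i) a - g i xstar a) ^ 2) := by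
            refine add_le_add (le_of_eq ?_) hproj
            refine Finset.sum_congr rfl fun j hj => Finset.sum_congr rfl fun a _ => ?_
            have hji : j ≠ i := Finset.notMem_singleton.mp (Finset.mem_sdiff.mp hj).2
            rw [hupd_off k i ⟨j, a⟩ hji, ← huip]
        _ = (∑ p : Idx n, (u i p - xstar p) ^ 2)
            - 2 * (α / q i) * (∑ a, (g i (u i) a - g i xstar a) * (u i ⟨i, a⟩ - xstar ⟨i, a⟩))
            + (α / q i) ^ 2 * ∑ a, (g i (u i) a - g i xstar a) ^ 2 := by
            rw [hsig (fun p => (u i p - xstar p) ^ 2),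
              Finset.sum_eq_sum_sdiff_singleton_add (Finset.mem_univ i)
                (fun j => ∑ a, (u i ⟨j, a⟩ - xstar ⟨j, a⟩) ^ 2)]
            ring
    -- ==== weighted sum over agents ====
    have hmain : E (k+1) ≤ Uh - 2*α*G + α^2*H := by
      have h1 : E (k+1) ≤ ∑ i, q i * ((∑ p : Idx n, (u i p - xstar p) ^ 2)
          - 2 * (α / q i) * (∑ a, (g i (u i) a - g i xstar a) * (u i ⟨i, a⟩ - xstar ⟨i, a⟩))
          + (α / q i) ^ 2 * ∑ a, (g i (u i) a - g i xstar a) ^ 2) := by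
        rw [hE]
        refine Finset.sum_le_sum fun i _ => ?_
        rw [← Finset.mul_sum]
        exact mul_le_mul_of_nonneg_left (hper i) (hqpos i).le
      have h2 : ∀ i : Fin N, q i * ((∑ p : Idx n, (u i p - xstar p) ^ 2)
          - 2 * (α / q i) * (∑ a, (g i (u i) a - g i xstar a) * (u i ⟨i, a⟩ - xstar ⟨i, a⟩))
          + (α / q i) ^ 2 * ∑ a, (g i (u i) a - g i xstar a) ^ 2)
          = (∑ p : Idx n, q i * (u i p - xstar p) ^ 2)
            - (2*α) * (∑ a, (g i (u i) a - g i xstar a) * (u i ⟨i, a⟩ - xstar ⟨i, a⟩))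
            + (α^2) * ((1 / q i) * ∑ a, (g i (u i) a - g i xstar a) ^ 2) := by
        intro i
        have hq0 : q i ≠ 0 := (hqpos i).ne'
        rw [← Finset.mul_sum]
        field_simp
      calc E (k+1) ≤ _ := h1
        _ = ∑ i, ((∑ p : Idx n, q i * (u i p - xstar p) ^ 2)
            - (2*α) * (∑ a, (g i (u i) a - g i xstar a) * (u i ⟨i, a⟩ - xstar ⟨i, a⟩))
            + (α^2) * ((1 / q i) * ∑ a, (g i (u i) a - g i xstar a) ^ 2)) :=
            Finset.sum_congr rfl fun i _ => h2 i
        _ = Uh - 2*α*G + α^2*H := by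
            rw [Finset.sum_add_distrib, Finset.sum_sub_distrib, ← Finset.mul_sum,
              ← Finset.mul_sum, hUh, hG, hH]
    -- ==== helper bounds ====
    have hqq : ∀ (F : Fin N → Idx n → ℝ),
        (∑ i, ∑ p : Idx n, (F i p) ^ 2) ≤ (1/qmin) * ∑ i, ∑ p : Idx n, q i * (F i p) ^ 2 := by
      intro F
      rw [Finset.mul_sum]
      refine Finset.sum_le_sum fun i _ => ?_
      rw [Finset.mul_sum]
      refine Finset.sum_le_sum fun p _ => ?_
      have h3 : qmin * F i p ^ 2 ≤ q i * F i p ^ 2 :=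
        mul_le_mul_of_nonneg_right (hqmin_le i) (sq_nonneg _)
      have h4 : 1/qmin * (qmin * F i p ^ 2) ≤ 1/qmin * (q i * F i p ^ 2) :=
        mul_le_mul_of_nonneg_left h3 (by positivity)
      have h5 : 1/qmin * (qmin * F i p ^ 2) = F i p ^ 2 := by field_simp
      linarith
    have hdiag_le : ∀ (F : Fin N → Idx n → ℝ),
        ∑ p : Idx n, (F p.1 p) ^ 2 ≤ ∑ i, ∑ p : Idx n, (F i p) ^ 2 := by
      intro F
      rw [hsig (fun p : Idx n => (F p.1 p) ^ 2)]
      refine Finset.sum_le_sum fun i _ => ?_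
      rw [hsig (fun p : Idx n => (F i p) ^ 2)]
      exact Finset.single_le_sum (f := fun j => ∑ a, (F i ⟨j, a⟩) ^ 2)
        (fun j _ => Finset.sum_nonneg fun a _ => sq_nonneg _) (Finset.mem_univ i)
    -- ==== bound on H ====
    have hHb : H ≤ ℓbar ^ 2 * Uh := by
      have h61 : H ≤ (1/qmin) * ∑ i, ∑ a, (g i (u i) a - g i xstar a) ^ 2 := by
        rw [hH, Finset.mul_sum]
        refine Finset.sum_le_sum fun i _ => ?_
        exact mul_le_mul_of_nonneg_right (one_div_le_one_div_of_le hqminpos (hqmin_le i))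
          (Finset.sum_nonneg fun a _ => sq_nonneg _)
      have h62 : ∑ i, ∑ a, (g i (u i) a - g i xstar a) ^ 2
          = ∑ p : Idx n, (g p.1 (u p.1) p.2 - g p.1 xstar p.2) ^ 2 :=
        (hsig (fun p : Idx n => (g p.1 (u p.1) p.2 - g p.1 xstar p.2) ^ 2)).symm
      have h63 : ∑ p : Idx n, (g p.1 (u p.1) p.2 - g p.1 xstar p.2) ^ 2
          ≤ ℓ ^ 2 * ∑ i, ∑ p : Idx n, (u i p - xstar p) ^ 2 := by
        refine sq_le_of_sqrt_le (Finset.sum_nonneg fun p _ => sq_nonneg _)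
          (Finset.sum_nonneg fun i _ => Finset.sum_nonneg fun p _ => sq_nonneg _) ?_
        exact hlip u (fun _ => xstar)
      have h64 : ∑ i, ∑ p : Idx n, (u i p - xstar p) ^ 2 ≤ (1/qmin) * Uh := by
        rw [hUh]
        exact hqq fun i p => u i p - xstar p
      have h65 : (0:ℝ) ≤ 1/qmin := by positivity
      calc H ≤ (1/qmin) * ∑ i, ∑ a, (g i (u i) a - g i xstar a) ^ 2 := h61
        _ = (1/qmin) * ∑ p : Idx n, (g p.1 (u p.1) p.2 - g p.1 xstar p.2) ^ 2 := by rw [h62]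
        _ ≤ (1/qmin) * (ℓ ^ 2 * ∑ i, ∑ p : Idx n, (u i p - xstar p) ^ 2) :=
            mul_le_mul_of_nonneg_left h63 h65
        _ ≤ (1/qmin) * (ℓ ^ 2 * ((1/qmin) * Uh)) := by
            refine mul_le_mul_of_nonneg_left ?_ h65
            exact mul_le_mul_of_nonneg_left h64 (by positivity)
        _ = ℓbar ^ 2 * Uh := by
            rw [hℓbar', div_pow]
            ring
    -- ==== square roots ====
    set sa : ℝ := Real.sqrt a2 with hsa
    set sb : ℝ := Real.sqrt b2 with hsb
    set sbh : ℝ := Real.sqrt bh2 with hsbh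
    have hsann : 0 ≤ sa := Real.sqrt_nonneg _
    have hsbnn : 0 ≤ sb := Real.sqrt_nonneg _
    have hsbhnn : 0 ≤ sbh := Real.sqrt_nonneg _
    have ha2eq : a2 = sa ^ 2 := (Real.sq_sqrt ha2nn).symm
    have hb2eq : b2 = sb ^ 2 := (Real.sq_sqrt hb2nn).symm
    have hbh2eq : bh2 = sbh ^ 2 := (Real.sq_sqrt hbh2nn).symm
    have hsbh_le : sbh ≤ σbar * sb := by
      rw [hsbh, hsb]
      calc Real.sqrt bh2 ≤ Real.sqrt (σbar ^ 2 * b2) := Real.sqrt_le_sqrt hF3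
        _ = σbar * Real.sqrt b2 := by
            rw [Real.sqrt_mul (sq_nonneg σbar), Real.sqrt_sq hσ0]
    have hrq : Real.sqrt (1/qmin) * Real.sqrt (1/qmin) = 1/qmin :=
      Real.mul_self_sqrt (by positivity)
    -- ==== the three factors ====
    have hfac1 : Real.sqrt (∑ p : Idx n, (g p.1 (u p.1) p.2 - g p.1 xb p.2) ^ 2)
        ≤ ℓ * (Real.sqrt (1/qmin) * sbh) := by
      have h2 : ∑ i, ∑ p : Idx n, (u i p - xb p) ^ 2 ≤ (1/qmin) * bh2 := by
        rw [hbh2]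
        exact hqq fun i p => u i p - xb p
      calc Real.sqrt (∑ p : Idx n, (g p.1 (u p.1) p.2 - g p.1 xb p.2) ^ 2)
          ≤ ℓ * Real.sqrt (∑ i, ∑ p : Idx n, (u i p - xb p) ^ 2) := hlip u (fun _ => xb)
        _ ≤ ℓ * Real.sqrt ((1/qmin) * bh2) :=
            mul_le_mul_of_nonneg_left (Real.sqrt_le_sqrt h2) hℓ.le
        _ = ℓ * (Real.sqrt (1/qmin) * sbh) := by
            rw [Real.sqrt_mul (by positivity) bh2, hsbh]
    have hfac2 : Real.sqrt (∑ p : Idx n, (u p.1 p - xstar p) ^ 2)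
        ≤ Real.sqrt (1/qmin) * (sa + sbh) := by
      have h1 : ∑ p : Idx n, (u p.1 p - xstar p) ^ 2 ≤ (1/qmin) * Uh := by
        refine le_trans (hdiag_le fun i p => u i p - xstar p) ?_
        rw [hUh]
        exact hqq fun i p => u i p - xstar p
      calc Real.sqrt (∑ p : Idx n, (u p.1 p - xstar p) ^ 2)
          ≤ Real.sqrt ((1/qmin) * Uh) := Real.sqrt_le_sqrt h1
        _ = Real.sqrt (1/qmin) * Real.sqrt (bh2 + a2) := by
            rw [Real.sqrt_mul (by positivity), hUhd]
        _ ≤ Real.sqrt (1/qmin) * (sbh + sa) := by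
            refine mul_le_mul_of_nonneg_left ?_ (Real.sqrt_nonneg _)
            calc Real.sqrt (bh2 + a2) ≤ Real.sqrt bh2 + Real.sqrt a2 :=
                  sqrt_add_le' hbh2nn ha2nn
              _ = sbh + sa := by rw [hsbh, hsa]
        _ = Real.sqrt (1/qmin) * (sa + sbh) := by ring
    have hfac3 : Real.sqrt (∑ p : Idx n, (g p.1 xb p.2 - g p.1 xstar p.2) ^ 2)
        ≤ ℓ * (Real.sqrt (1/qmin) * sa) := by
      have h1 : ∑ i : Fin N, ∑ p : Idx n, (xb p - xstar p) ^ 2 ≤ (1/qmin) * a2 := by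
        have h2 : ∑ i : Fin N, ∑ p : Idx n, (xb p - xstar p) ^ 2 = (N : ℝ) * a2 := by
          rw [Finset.sum_congr rfl fun (i : Fin N) _ => (ha2).symm, Finset.sum_const,
            Finset.card_univ, Fintype.card_fin, nsmul_eq_mul]
        rw [h2]
        have h3 : (N : ℝ) ≤ 1/qmin := by
          rw [le_div_iff₀ hqminpos]
          exact hNqmin
        exact mul_le_mul_of_nonneg_right h3 ha2nn
      calc Real.sqrt (∑ p : Idx n, (g p.1 xb p.2 - g p.1 xstar p.2) ^ 2)
          ≤ ℓ * Real.sqrt (∑ i : Fin N, ∑ p : Idx n, (xb p - xstar p) ^ 2) :=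
            hlip (fun _ => xb) (fun _ => xstar)
        _ ≤ ℓ * Real.sqrt ((1/qmin) * a2) :=
            mul_le_mul_of_nonneg_left (Real.sqrt_le_sqrt h1) hℓ.le
        _ = ℓ * (Real.sqrt (1/qmin) * sa) := by
            rw [Real.sqrt_mul (by positivity) a2, hsa]
    have hfac4 : Real.sqrt (∑ p : Idx n, (u p.1 p - xb p) ^ 2)
        ≤ Real.sqrt (1/qmin) * sbh := by
      have h1 : ∑ p : Idx n, (u p.1 p - xb p) ^ 2 ≤ (1/qmin) * bh2 := by
        refine le_trans (hdiag_le fun i p => u i p - xb p) ?_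
        rw [hbh2]
        exact hqq fun i p => u i p - xb p
      calc Real.sqrt (∑ p : Idx n, (u p.1 p - xb p) ^ 2)
          ≤ Real.sqrt ((1/qmin) * bh2) := Real.sqrt_le_sqrt h1
        _ = Real.sqrt (1/qmin) * sbh := by rw [Real.sqrt_mul (by positivity) bh2, hsbh]
    -- ==== lower bounds on the three parts of G ====
    have hG1 : μ * a2 ≤ ∑ p : Idx n, (g p.1 xb p.2 - g p.1 xstar p.2) * (xb p - xstar p) := by
      have h1 := hmono xb xstar
      rw [← ha2] at h1
      exact h1
    have hG2 : -(ℓbar * sbh * (sa + sbh))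
        ≤ ∑ p : Idx n, (g p.1 (u p.1) p.2 - g p.1 xb p.2) * (u p.1 p - xstar p) := by
      have hcs := neg_sqrt_CS Finset.univ (fun p : Idx n => g p.1 (u p.1) p.2 - g p.1 xb p.2)
        (fun p : Idx n => u p.1 p - xstar p)
      have hmul : Real.sqrt (∑ p : Idx n, (g p.1 (u p.1) p.2 - g p.1 xb p.2) ^ 2) *
            Real.sqrt (∑ p : Idx n, (u p.1 p - xstar p) ^ 2)
          ≤ (ℓ * (Real.sqrt (1/qmin) * sbh)) * (Real.sqrt (1/qmin) * (sa + sbh)) :=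
        mul_le_mul hfac1 hfac2 (Real.sqrt_nonneg _) (by positivity)
      have hid : (ℓ * (Real.sqrt (1/qmin) * sbh)) * (Real.sqrt (1/qmin) * (sa + sbh))
          = ℓbar * sbh * (sa + sbh) := by
        rw [hℓbar']
        linear_combination (ℓ * sbh * (sa + sbh)) * hrq
      linarith
    have hG3 : -(ℓbar * sa * sbh)
        ≤ ∑ p : Idx n, (g p.1 xb p.2 - g p.1 xstar p.2) * (u p.1 p - xb p) := by
      have hcs := neg_sqrt_CS Finset.univ (fun p : Idx n => g p.1 xb p.2 - g p.1 xstar p.2)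
        (fun p : Idx n => u p.1 p - xb p)
      have hmul : Real.sqrt (∑ p : Idx n, (g p.1 xb p.2 - g p.1 xstar p.2) ^ 2) *
            Real.sqrt (∑ p : Idx n, (u p.1 p - xb p) ^ 2)
          ≤ (ℓ * (Real.sqrt (1/qmin) * sa)) * (Real.sqrt (1/qmin) * sbh) :=
        mul_le_mul hfac3 hfac4 (Real.sqrt_nonneg _) (by positivity)
      have hid : (ℓ * (Real.sqrt (1/qmin) * sa)) * (Real.sqrt (1/qmin) * sbh)
          = ℓbar * sa * sbh := by
        rw [hℓbar']
        linear_combination (ℓ * sa * sbh) * hrq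
      linarith
    -- ==== decomposition of G ====
    have hGd : G = (∑ p : Idx n, (g p.1 xb p.2 - g p.1 xstar p.2) * (xb p - xstar p))
        + (∑ p : Idx n, (g p.1 (u p.1) p.2 - g p.1 xb p.2) * (u p.1 p - xstar p))
        + (∑ p : Idx n, (g p.1 xb p.2 - g p.1 xstar p.2) * (u p.1 p - xb p)) := by
      have e0 : G = ∑ p : Idx n, (g p.1 (u p.1) p.2 - g p.1 xstar p.2) * (u p.1 p - xstar p) := by
        rw [hG, hsig (fun p : Idx n =>
          (g p.1 (u p.1) p.2 - g p.1 xstar p.2) * (u p.1 p - xstar p))]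
      rw [e0, ← Finset.sum_add_distrib, ← Finset.sum_add_distrib]
      refine Finset.sum_congr rfl fun p _ => ?_
      ring
    have hGb : μ * a2 - ℓbar * sbh * (sa + sbh) - ℓbar * sa * sbh ≤ G := by
      rw [hGd]
      linarith [hG1, hG2, hG3]
    -- ==== final assembly ====
    calc E (k+1) ≤ Uh - 2*α*G + α^2*H := hmain
      _ ≤ Uh - 2*α*(μ * a2 - ℓbar * sbh * (sa + sbh) - ℓbar * sa * sbh)
          + α^2*(ℓbar^2 * Uh) := by
          have t1 := mul_le_mul_of_nonneg_left hGb (by positivity : (0:ℝ) ≤ 2*α)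
          have t2 := mul_le_mul_of_nonneg_left hHb (by positivity : (0:ℝ) ≤ α^2)
          linarith
      _ = (1 - 2*α*μ + α^2*ℓbar^2)*sa^2 + 4*α*ℓbar*(sa*sbh)
          + (1 + 2*α*ℓbar + α^2*ℓbar^2)*sbh^2 := by
          rw [hUhd]
          linear_combination (1 + α^2*ℓbar^2) * hbh2eq + (1 - 2*α*μ + α^2*ℓbar^2) * ha2eq
      _ ≤ (1 - 2*α*μ + α^2*ℓbar^2)*sa^2 + 4*α*ℓbar*(sa*(σbar*sb))
          + (1 + 2*α*ℓbar + α^2*ℓbar^2)*((σbar*sb)^2) := by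
          have t1 : sa*sbh ≤ sa*(σbar*sb) := mul_le_mul_of_nonneg_left hsbh_le hsann
          have t2 : sbh^2 ≤ (σbar*sb)^2 := pow_le_pow_left₀ hsbhnn hsbh_le 2
          have c1 : (0:ℝ) ≤ 4*α*ℓbar := by positivity
          have c2 : (0:ℝ) ≤ 1 + 2*α*ℓbar + α^2*ℓbar^2 := by positivity
          have t3 := mul_le_mul_of_nonneg_left t1 c1
          have t4 := mul_le_mul_of_nonneg_left t2 c2
          linarith
      _ ≤ (1 - 2*α*μbar*qmin + α^2*ℓbar^2)*sa^2 + 4*α*ℓbar*σbar*(sa*sb)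
          + (1 + 2*α*ℓbar + α^2*ℓbar^2)*σbar^2*sb^2 := by
          have t1 : 2*α*(μbar*qmin) ≤ 2*α*μ :=
            mul_le_mul_of_nonneg_left hμbarqmin (by positivity : (0:ℝ) ≤ 2*α)
          have t2 : 2*α*(μbar*qmin)*sa^2 ≤ 2*α*μ*sa^2 :=
            mul_le_mul_of_nonneg_right t1 (sq_nonneg sa)
          linarith [t2]
      _ ≤ ρ * (sa^2 + sb^2) := hquad sa sb
      _ = ρ * E k := by
          rw [hEk, ← ha2eq, ← hb2eq]
          ring
  -- ======== conclusion by induction ========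
  intro k
  rw [hwE k, hwE 0]
  induction k with
  | zero => simp
  | succ k ih =>
    have h1 : Real.sqrt (E (k+1)) ≤ Real.sqrt ρ * Real.sqrt (E k) := by
      rw [← Real.sqrt_mul hρ0]
      exact Real.sqrt_le_sqrt (hstep k)
    calc Real.sqrt (E (k+1)) ≤ Real.sqrt ρ * Real.sqrt (E k) := h1
      _ ≤ Real.sqrt ρ * (Real.sqrt ρ ^ k * Real.sqrt (E 0)) :=
          mul_le_mul_of_nonneg_left ih (Real.sqrt_nonneg ρ)
      _ = Real.sqrt ρ ^ (k+1) * Real.sqrt (E 0) := by ring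
end

section
/- Fix constants μ̄ > 0, ℓ̄ > 0, c > 0 and σ̄ ∈ [0,1), and for α ≥ 0 define the symmetric matrix M_α = [[1 − 2αμ̄c + α²ℓ̄², 2αℓ̄σ̄], [2αℓ̄σ̄, (1 + 2αℓ̄ + α²ℓ̄²)σ̄²]] and ρ_α = λ_max(M_α). Then √(ρ_α) = 1 − μ̄c·α + o(α) as α → 0⁺; that is, lim_{α→0⁺} (√(ρ_α) − 1)/α = −μ̄c. In particular, ρ_α < 1 for all sufficiently small α > 0, so the step-size condition λ_max(M_α) < 1 can always be satisfied. -/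
open Filter

open Matrix in
lemma herm_fin_two (a b d : ℝ) : (!![a, b; b, d]).IsHermitian := by
  ext i j
  fin_cases i <;> fin_cases j <;> simp [Matrix.conjTranspose, Matrix.vecHead, Matrix.vecTail]

lemma trace_eq_sum_eig {n : Type*} [Fintype n] [DecidableEq n] {A : Matrix n n ℝ}
    (hA : A.IsHermitian) : A.trace = ∑ i, hA.eigenvalues i := by
  simpa using hA.trace_eq_sum_eigenvalues

lemma eigMax_fin_two (a b d : ℝ) :
    eigMax !![a, b; b, d] = ((a + d) + Real.sqrt ((a - d) ^ 2 + 4 * b ^ 2)) / 2 := by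
  have hH := herm_fin_two a b d
  rw [eigMax, dif_pos hH]
  set e := hH.eigenvalues with he
  have hsum : e 0 + e 1 = a + d := by
    have := trace_eq_sum_eig hH
    rw [Matrix.trace_fin_two_of] at this
    rw [this, Fin.sum_univ_two]
  have hprod : e 0 * e 1 = a * d - b * b := by
    have := hH.det_eq_prod_eigenvalues
    rw [Matrix.det_fin_two_of] at this
    simp only [Fin.prod_univ_two, RCLike.ofReal_real_eq_id, id] at this
    rw [this]
  have hdiff : (e 0 - e 1) ^ 2 = (a - d) ^ 2 + 4 * b ^ 2 := by
    have h : (e 0 - e 1) ^ 2 = (e 0 + e 1) ^ 2 - 4 * (e 0 * e 1) := by ring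
    rw [h, hsum, hprod]; ring
  have hsqrt : Real.sqrt ((a - d) ^ 2 + 4 * b ^ 2) = |e 0 - e 1| := by
    rw [← hdiff, Real.sqrt_sq_eq_abs]
  have hsup : ⨆ i, e i = max (e 0) (e 1) := by
    apply le_antisymm
    · exact ciSup_le fun i => by fin_cases i <;> simp [le_max_left, le_max_right]
    · refine max_le ?_ ?_ <;> exact le_ciSup (Set.Finite.bddAbove (Set.finite_range e)) _
  rw [hsup, hsqrt]
  rcases le_total (e 0) (e 1) with h | h
  · rw [max_eq_right h, abs_of_nonpos (by linarith)]; linarith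
  · rw [max_eq_left h, abs_of_nonneg (by linarith)]; linarith

/-- with `ρ_α = λ_max(M_α)` for the 2×2 matrix `M_α` of Lemma 4, one has
the expansion `√(ρ_α) = 1 - μ̄ c α + o(α)` as `α → 0⁺`, i.e.
`(√(ρ_α) - 1)/α → -μ̄ c`; in particular `ρ_α < 1` for all sufficiently small `α > 0`. -/
theorem stmt18
    (μbar ℓbar c σbar : ℝ)
    (hμbar : 0 < μbar) (hℓbar : 0 < ℓbar) (hc : 0 < c)
    (hσnonneg : 0 ≤ σbar) (hσlt : σbar < 1)
    (ρ : ℝ → ℝ)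
    (hρ : ∀ α : ℝ, ρ α = eigMax
      !![1 - 2 * α * μbar * c + α ^ 2 * ℓbar ^ 2, 2 * α * ℓbar * σbar;
         2 * α * ℓbar * σbar, (1 + 2 * α * ℓbar + α ^ 2 * ℓbar ^ 2) * σbar ^ 2]) :
    Tendsto (fun α : ℝ => (Real.sqrt (ρ α) - 1) / α)
        (nhdsWithin 0 (Set.Ioi 0)) (nhds (-(μbar * c))) ∧
      ∃ αbar > (0 : ℝ), ∀ α : ℝ, 0 < α → α < αbar → ρ α < 1 := by
  have hσ2 : σbar ^ 2 < 1 := by nlinarith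
  have h1σ : 0 < 1 - σbar ^ 2 := by linarith
  set A : ℝ → ℝ := fun α => 1 - 2 * μbar * c * α + ℓbar ^ 2 * α ^ 2 with hAdef
  set D : ℝ → ℝ := fun α => (1 + 2 * ℓbar * α + ℓbar ^ 2 * α ^ 2) * σbar ^ 2 with hDdef
  set B : ℝ → ℝ := fun α => 2 * ℓbar * σbar * α with hBdef
  set q : ℝ → ℝ := fun α => (A α - D α) ^ 2 + 4 * (B α) ^ 2 with hqdef
  set f : ℝ → ℝ := fun α => ((A α + D α) + Real.sqrt (q α)) / 2 with hfdef
  have hρf : ∀ α, ρ α = f α := by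
    intro α
    rw [hρ α, eigMax_fin_two]
    have e1 : (1 - 2 * α * μbar * c + α ^ 2 * ℓbar ^ 2
        - (1 + 2 * α * ℓbar + α ^ 2 * ℓbar ^ 2) * σbar ^ 2) ^ 2
        + 4 * (2 * α * ℓbar * σbar) ^ 2 = q α := by
      simp only [hqdef, hAdef, hDdef, hBdef]; ring
    rw [e1, hfdef]
    simp only [hAdef, hDdef]
    ring
  -- values at 0
  have hA0 : A 0 = 1 := by simp [hAdef]
  have hD0 : D 0 = σbar ^ 2 := by simp [hDdef]
  have hB0 : B 0 = 0 := by simp [hBdef]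
  have hq0 : q 0 = (1 - σbar ^ 2) ^ 2 := by
    simp only [hqdef]; rw [hA0, hD0, hB0]; ring
  have hsq0 : Real.sqrt (q 0) = 1 - σbar ^ 2 := by
    rw [hq0, Real.sqrt_sq h1σ.le]
  have hf0 : f 0 = 1 := by
    simp only [hfdef]; rw [hsq0, hA0, hD0]; ring
  -- derivatives at 0
  have hid : HasDerivAt (fun x : ℝ => x) 1 0 := hasDerivAt_id' 0
  have hA' : HasDerivAt A (-(2 * μbar * c)) 0 := by
    have h := (((hid.const_mul (2 * μbar * c)).const_sub 1).add
      ((hid.pow 2).const_mul (ℓbar ^ 2)))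
    refine h.congr_deriv ?_
    norm_num
  have hD' : HasDerivAt D (2 * ℓbar * σbar ^ 2) 0 := by
    have h := ((((hid.const_mul (2 * ℓbar)).const_add 1).add
      ((hid.pow 2).const_mul (ℓbar ^ 2))).mul_const (σbar ^ 2))
    refine h.congr_deriv ?_
    norm_num
  have hB' : HasDerivAt B (2 * ℓbar * σbar) 0 := by
    have h := hid.const_mul (2 * ℓbar * σbar)
    refine h.congr_deriv ?_
    norm_num
  have hq' : HasDerivAt q
      (2 * (1 - σbar ^ 2) * (-(2 * μbar * c) - 2 * ℓbar * σbar ^ 2)) 0 := by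
    have h := ((hA'.sub hD').pow 2).add ((hB'.pow 2).const_mul 4)
    refine h.congr_deriv ?_
    rw [Pi.sub_apply, hA0, hD0, hB0]
    push_cast
    ring
  have hqne : q 0 ≠ 0 := by rw [hq0]; exact pow_ne_zero _ (ne_of_gt h1σ)
  have hqsqrt : HasDerivAt (fun α => Real.sqrt (q α))
      (-(2 * μbar * c) - 2 * ℓbar * σbar ^ 2) 0 := by
    have h := hq'.sqrt hqne
    convert h using 1
    rw [hsq0, eq_div_iff (by positivity)]
    ring
  have hf' : HasDerivAt f (-(2 * μbar * c)) 0 := by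
    have h := ((hA'.add hD').add hqsqrt).div_const 2
    refine h.congr_deriv ?_
    ring
  have hfne : f 0 ≠ 0 := by rw [hf0]; norm_num
  have hg : HasDerivAt (fun α => Real.sqrt (f α)) (-(μbar * c)) 0 := by
    have h := hf'.sqrt hfne
    convert h using 1
    rw [hf0, Real.sqrt_one, mul_one]
    ring
  have key : Tendsto (fun α : ℝ => (Real.sqrt (ρ α) - 1) / α)
      (nhdsWithin 0 (Set.Ioi 0)) (nhds (-(μbar * c))) := by
    have hslope := (hasDerivAt_iff_tendsto_slope.mp hg).mono_left
      (nhdsWithin_mono 0 (fun x hx => ne_of_gt hx : Set.Ioi (0:ℝ) ⊆ {0}ᶜ))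
    refine hslope.congr fun α => ?_
    rw [slope_def_field, hρf α, hf0, Real.sqrt_one, sub_zero]
  refine ⟨key, ?_⟩
  have hev : ∀ᶠ α in nhdsWithin (0:ℝ) (Set.Ioi 0),
      (Real.sqrt (ρ α) - 1) / α < 0 :=
    key (isOpen_Iio.mem_nhds (by simp; positivity : -(μbar * c) ∈ Set.Iio 0))
  obtain ⟨u, hu, hsub⟩ := mem_nhdsGT_iff_exists_Ioo_subset.mp hev
  refine ⟨u, hu, fun α hα hαu => ?_⟩
  have h : (Real.sqrt (ρ α) - 1) / α < 0 := hsub ⟨hα, hαu⟩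
  have hlt : Real.sqrt (ρ α) < 1 := by
    rcases div_neg_iff.mp h with ⟨h1, h2⟩ | ⟨h1, h2⟩
    · linarith
    · linarith
  rcases le_or_gt (ρ α) 0 with h0 | h0
  · linarith
  · have hr : ρ α = Real.sqrt (ρ α) ^ 2 := (Real.sq_sqrt h0.le).symm
    rw [hr]
    calc Real.sqrt (ρ α) ^ 2 < 1 ^ 2 :=
          pow_lt_pow_left₀ hlt (Real.sqrt_nonneg _) (by norm_num)
      _ = 1 := one_pow 2
end
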